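/- Let (Ω, F, P) be a probability space and E_1, E_2, ... independent sub-σ-fields. Then the conditional expectation operators E[·|E_n] converge to the expectation operator f ↦ E[f]·1 in the strong operator topology on L²; i.e., for every f ∈ L²(Ω, F, P), E[f | E_n] → E[f] in L² as n → ∞. -/

import Mathlib

open MeasureTheory ProbabilityTheory Filter

open scoped RealInnerProductSpace

/-- The conditional expectation of an `L²` function is in `L²`. -/
lemma memℒp_two_condexp_aux {Ω : Type*} {m0 : MeasurableSpace Ω}
    (P : Measure Ω) [IsProbabilityMeasure P] {m : MeasurableSpace Ω} (hm : m ≤ m0)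
    {f : Ω → ℝ} (hf : MemLp f 2 P) : MemLp (P[f|m]) 2 P := by
  have h1 : (condExpL2 ℝ ℝ hm (hf.toLp f) : Ω → ℝ) =ᵐ[P] P[f|m] := by
    refine ae_eq_condExp_of_forall_setIntegral_eq hm (hf.integrable one_le_two)
      (fun s hs hμs => integrableOn_condExpL2_of_measure_ne_top hm hμs.ne _)
      (fun s hs hμs => ?_) (aestronglyMeasurable_condExpL2 hm _)
    rw [integral_condExpL2_eq hm (hf.toLp f) hs hμs.ne]
    exact integral_congr_ae (ae_restrict_of_ae hf.coeFn_toLp)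
  exact (Lp.memLp _).ae_eq h1

/-- Bessel-type inequality for pairwise orthogonal vectors `y i` with
`⟪x, y i⟫ = ‖y i‖ ^ 2`. -/
lemma bessel_aux {H : Type*} [NormedAddCommGroup H] [InnerProductSpace ℝ H]
    (x : H) (y : ℕ → H) (horth : ∀ i j, i ≠ j → ⟪y i, y j⟫ = 0)
    (hproj : ∀ i, ⟪x, y i⟫ = ‖y i‖ ^ 2) (s : Finset ℕ) :
    ∑ i ∈ s, ‖y i‖ ^ 2 ≤ ‖x‖ ^ 2 := by
  have h0 : (0 : ℝ) ≤ ‖x - ∑ i ∈ s, y i‖ ^ 2 := sq_nonneg _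
  have hx : ⟪x, ∑ i ∈ s, y i⟫ = ∑ i ∈ s, ‖y i‖ ^ 2 := by
    rw [inner_sum]
    exact Finset.sum_congr rfl fun i _ => hproj i
  have hs : ‖∑ i ∈ s, y i‖ ^ 2 = ∑ i ∈ s, ‖y i‖ ^ 2 := by
    rw [← real_inner_self_eq_norm_sq, sum_inner]
    refine Finset.sum_congr rfl fun i hi => ?_
    rw [inner_sum, Finset.sum_eq_single i (fun j _ hj => horth i j (Ne.symm hj))
      (fun h => absurd hi h)]
    exact real_inner_self_eq_norm_sq _
  rw [norm_sub_sq_real, hx, hs] at h0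
  linarith

/-- For independent sub-σ-fields `Eₙ`, the conditional expectation operators
converge strongly on `L²` to the (unconditional) expectation operator:
`E[f | Eₙ] → E[f]` in `L²` for every `f ∈ L²`. -/
theorem condexp_indep_tendsto_expectation {Ω : Type*} {m0 : MeasurableSpace Ω}
    (P : Measure Ω) [IsProbabilityMeasure P]
    (En : ℕ → MeasurableSpace Ω) (hle : ∀ n, En n ≤ m0)
    (hindep : iIndep En P)
    (f : Ω → ℝ) (hf : MemLp f 2 P) :
    Tendsto (fun n => eLpNorm (P[f | En n] - fun _ => ∫ ω, f ω ∂P) 2 P) atTop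
      (nhds 0) := by
  set c : ℝ := ∫ ω, f ω ∂P with hc
  set g : ℕ → Ω → ℝ := fun n => P[f | En n] - fun _ => c with hg
  have hfint : Integrable f P := hf.integrable one_le_two
  have hgm : ∀ n, StronglyMeasurable[En n] (g n) :=
    fun n => stronglyMeasurable_condExp.sub stronglyMeasurable_const
  have hgmem : ∀ n, MemLp (g n) 2 P :=
    fun n => (memℒp_two_condexp_aux P (hle n) hf).sub (memLp_const c)
  have hgint : ∀ n, Integrable (g n) P := fun n => (hgmem n).integrable one_le_two
  have hgzero : ∀ n, ∫ ω, g n ω ∂P = 0 := by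
    intro n
    have h1 : ∫ ω, g n ω ∂P = (∫ ω, (P[f | En n]) ω ∂P) - ∫ _, c ∂P :=
      integral_sub integrable_condExp (integrable_const c)
    rw [h1, integral_condExp (hle n), integral_const]
    simp [hc]
  -- orthogonality via independence
  have horthF : ∀ i j, i ≠ j → ∫ ω, g i ω * g j ω ∂P = 0 := by
    intro i j hij
    have hfind : IndepFun (g i) (g j) P := by
      rw [IndepFun_iff_Indep]
      exact indep_of_indep_of_le_right
        (indep_of_indep_of_le_left (hindep.indep hij) (hgm i).measurable.comap_le)
        (hgm j).measurable.comap_le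
    have h := hfind.integral_fun_mul_eq_mul_integral (hgint i).aestronglyMeasurable (hgint j).aestronglyMeasurable
    simpa [hgzero i, hgzero j] using h
  -- integrability of products of L² functions
  have hmul : ∀ (u v : Ω → ℝ), MemLp u 2 P → MemLp v 2 P →
      Integrable (fun ω => u ω * v ω) P := by
    intro u v hu hv
    have h := hv.smul (φ := u) (r := 1) hu
    rw [memLp_one_iff_integrable] at h
    exact h
  -- projection property
  have hproj : ∀ n, ∫ ω, (f ω - c) * g n ω ∂P = ∫ ω, g n ω * g n ω ∂P := by
    intro n
    have hint1 : Integrable (fun ω => g n ω * f ω) P := hmul _ _ (hgmem n) hf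
    have key : ∫ ω, g n ω * f ω ∂P = ∫ ω, g n ω * (P[f | En n]) ω ∂P := by
      have h1 : ∫ ω, (P[(fun ω => g n ω * f ω) | En n]) ω ∂P = ∫ ω, g n ω * f ω ∂P :=
        integral_condExp (hle n)
      have h2 : P[(fun ω => g n ω * f ω) | En n] =ᵐ[P]
          fun ω => g n ω * (P[f | En n]) ω := by
        have := condExp_mul_of_stronglyMeasurable_left (hgm n) hint1 hfint
        exact this
      rw [← h1, integral_congr_ae h2]
    have hexp : ∀ ω, g n ω * (P[f | En n]) ω = g n ω * g n ω + c * g n ω := by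
      intro ω
      simp only [hg, Pi.sub_apply]
      ring
    have h3 : ∫ ω, (f ω - c) * g n ω ∂P
        = ∫ ω, g n ω * f ω ∂P - c * ∫ ω, g n ω ∂P := by
      have heq : (fun ω => (f ω - c) * g n ω) = fun ω => g n ω * f ω - c * g n ω := by
        funext ω; ring
      rw [heq, integral_sub hint1 ((hgint n).const_mul c), integral_const_mul c (g n)]
    have h4 : ∫ ω, g n ω * (P[f | En n]) ω ∂P = ∫ ω, g n ω * g n ω ∂P := by
      have heq : (fun ω => g n ω * (P[f | En n]) ω)
          = fun ω => g n ω * g n ω + c * g n ω := funext hexp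
      rw [heq, integral_add (hmul _ _ (hgmem n) (hgmem n)) ((hgint n).const_mul c),
        integral_const_mul c (g n), hgzero n, mul_zero, add_zero]
    rw [h3, hgzero n, mul_zero, sub_zero, key, h4]
  -- move to the Hilbert space `L²`
  classical
  let X : Lp ℝ 2 P := (hf.sub (memLp_const c)).toLp (f - fun _ => c)
  let Y : ℕ → Lp ℝ 2 P := fun n => (hgmem n).toLp (g n)
  have hinner : ∀ (u v : Ω → ℝ) (hu : MemLp u 2 P) (hv : MemLp v 2 P),
      ⟪hu.toLp u, hv.toLp v⟫ = ∫ ω, u ω * v ω ∂P := by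
    intro u v hu hv
    rw [L2.inner_def]
    refine integral_congr_ae ?_
    filter_upwards [hu.coeFn_toLp, hv.coeFn_toLp] with ω h1 h2
    simp [h1, h2, RCLike.inner_apply, mul_comm]
  have horthY : ∀ i j, i ≠ j → ⟪Y i, Y j⟫ = 0 := fun i j hij => by
    rw [hinner _ _ (hgmem i) (hgmem j)]; exact horthF i j hij
  have hprojY : ∀ n, ⟪X, Y n⟫ = ‖Y n‖ ^ 2 := by
    intro n
    rw [← real_inner_self_eq_norm_sq (Y n)]
    show ⟪X, Y n⟫ = ⟪Y n, Y n⟫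
    rw [hinner _ _ (hf.sub (memLp_const c)) (hgmem n), hinner _ _ (hgmem n) (hgmem n)]
    exact hproj n
  have hsum : ∀ s : Finset ℕ, ∑ i ∈ s, ‖Y i‖ ^ 2 ≤ ‖X‖ ^ 2 :=
    bessel_aux X Y horthY hprojY
  have hsummable : Summable fun n => ‖Y n‖ ^ 2 :=
    summable_of_sum_range_le (fun n => sq_nonneg _) fun n => hsum (Finset.range n)
  have h2 : Tendsto (fun n => ‖Y n‖ ^ 2) atTop (nhds 0) := hsummable.tendsto_atTop_zero
  have h1 : Tendsto (fun n => ‖Y n‖) atTop (nhds 0) := by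
    have hsq : Tendsto (fun n => Real.sqrt (‖Y n‖ ^ 2)) atTop (nhds (Real.sqrt 0)) :=
      (Real.continuous_sqrt.tendsto 0).comp h2
    simpa [Real.sqrt_sq, norm_nonneg] using hsq
  have heq : ∀ n, eLpNorm (P[f | En n] - fun _ => c) 2 P = ENNReal.ofReal ‖Y n‖ := by
    intro n
    rw [ofReal_norm_eq_enorm, Lp.enorm_toLp (hgmem n)]
  have hfinal : Tendsto (fun n => ENNReal.ofReal ‖Y n‖) atTop (nhds 0) := by
    have := (ENNReal.continuous_ofReal.tendsto 0).comp h1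
    simpa [Function.comp_def] using this
  simp only [heq]
  exact hfinal
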